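/- arXiv:1905.10882 — 2 statements merged into one kernel-verified Lean document; each statement's English description precedes it below -/
import Mathlib

section
/- Let f be an E-polynomial with pseudo-degree pdeg(f) = (m₀, n₀), and suppose the polynomial F defining f has deg_X(F) = d₀. If δ = deg(h), then the pseudo-derivative pder(f) is defined by a polynomial with degree in X bounded by d₀ + δ − 1, and pdeg(pder(f)) = (m₀, n₀ − 1) if n₀ ≠ 0, while if n₀ = 0 then pdeg(pder(f)) = (m₀', n₀') with m₀' ≤ m₀ − 1 and n₀' ≤ d₀ + δ − 1. In particular, pdeg(pder(f)) < pdeg(f) in the lexicographic order whenever f is not constant. -/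
noncomputable section

/-- Evaluation of a bivariate integer polynomial (a polynomial in `Y` with coefficients
in `ℤ[X]`) at `(x, y) ∈ ℝ²`. -/
def ev (P : Polynomial (Polynomial ℤ)) (x y : ℝ) : ℝ :=
  Polynomial.eval₂ (Polynomial.eval₂RingHom (Int.castRingHom ℝ) x) y P

/-- The E-polynomial `x ↦ F(x, e^{h(x)})`. -/
def epoly (h : Polynomial ℤ) (F : Polynomial (Polynomial ℤ)) (x : ℝ) : ℝ :=
  ev F x (Real.exp (Polynomial.eval₂ (Int.castRingHom ℝ) x h))

/-- Partial derivative with respect to `X` (the inner variable). -/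
def dX (P : Polynomial (Polynomial ℤ)) : Polynomial (Polynomial ℤ) :=
  P.sum fun n c => Polynomial.C (Polynomial.derivative c) * Polynomial.X ^ n

/-- The polynomial `F̃ = ∂F/∂X + (∂F/∂Y)·h'(X)·Y` defining the derivative of the
E-polynomial `x ↦ F(x, e^{h(x)})`. -/
def FtildeE (h : Polynomial ℤ) (F : Polynomial (Polynomial ℤ)) : Polynomial (Polynomial ℤ) :=
  dX F + Polynomial.derivative F * (Polynomial.C (Polynomial.derivative h) * Polynomial.X)

/-- The pseudo-derivative at the level of defining polynomials: it is `F̃` when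
`deg_X F(X,0) > 0`; when `F(X,0)` is constant and `F̃ ≠ 0` it is `F̃` divided by the
largest power `Y^k` dividing it; and it is `0` when `F̃ = 0`. -/
def pderPoly (h : Polynomial ℤ) (F : Polynomial (Polynomial ℤ)) : Polynomial (Polynomial ℤ) :=
  let Ft := FtildeE h F
  if Ft = 0 then 0
  else if 0 < (F.coeff 0).natDegree then Ft
  else Polynomial.divX^[Ft.natTrailingDegree] Ft

/-- Total degree of a bivariate polynomial written in `ℤ[X][Y]`. -/
def tdeg (P : Polynomial (Polynomial ℤ)) : ℕ :=
  P.support.sup fun n => n + (P.coeff n).natDegree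

/-- Degree in `X` of a bivariate polynomial written in `ℤ[X][Y]`. -/
def degX (P : Polynomial (Polynomial ℤ)) : ℕ :=
  P.support.sup fun n => (P.coeff n).natDegree

open Polynomial

private lemma coeff_dX (F : Polynomial (Polynomial ℤ)) (n : ℕ) :
    (dX F).coeff n = derivative (F.coeff n) := by
  classical
  rw [dX, Polynomial.sum, finset_sum_coeff]
  simp only [C_mul_X_pow_eq_monomial, coeff_monomial]
  rw [Finset.sum_ite_eq' F.support n (fun k => derivative (F.coeff k))]
  split_ifs with hmem
  · rfl
  · rw [Polynomial.notMem_support_iff.mp hmem, map_zero]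

private lemma coeff_Ftilde (h : Polynomial ℤ) (F : Polynomial (Polynomial ℤ)) (n : ℕ) :
    (FtildeE h F).coeff n
      = derivative (F.coeff n) + F.coeff n * (n : Polynomial ℤ) * derivative h := by
  rw [FtildeE, coeff_add, coeff_dX]
  congr 1
  rw [show Polynomial.derivative F * (C (derivative h) * X)
      = (Polynomial.derivative F * C (derivative h)) * X by ring]
  cases n with
  | zero => simp [mul_coeff_zero]
  | succ m =>
      rw [coeff_mul_X, coeff_mul_C, coeff_derivative]
      push_cast
      ring

private lemma coeff_natDegree_le_degX (P : Polynomial (Polynomial ℤ)) (n : ℕ) :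
    (P.coeff n).natDegree ≤ degX P := by
  by_cases hn : n ∈ P.support
  · exact Finset.le_sup (f := fun n => (P.coeff n).natDegree) hn
  · simp [Polynomial.notMem_support_iff.mp hn]

private lemma degX_le {P : Polynomial (Polynomial ℤ)} {B : ℕ}
    (hb : ∀ n, (P.coeff n).natDegree ≤ B) : degX P ≤ B :=
  Finset.sup_le fun n _ => hb n

private lemma coeff_Ftilde_natDegree_le (h : Polynomial ℤ) (F : Polynomial (Polynomial ℤ))
    (n : ℕ) (hδ : 0 < h.natDegree) :
    ((FtildeE h F).coeff n).natDegree ≤ degX F + h.natDegree - 1 := by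
  rw [coeff_Ftilde]
  have hd := coeff_natDegree_le_degX F n
  have h1 : (derivative (F.coeff n)).natDegree ≤ degX F + h.natDegree - 1 := by
    have := natDegree_derivative_le (F.coeff n)
    omega
  have h2 : (F.coeff n * (n : Polynomial ℤ) * derivative h).natDegree
      ≤ degX F + h.natDegree - 1 := by
    have t1 := natDegree_mul_le (p := F.coeff n * (n : Polynomial ℤ)) (q := derivative h)
    have t2 := natDegree_mul_le (p := F.coeff n) (q := (n : Polynomial ℤ))
    have t3 := natDegree_derivative_le h
    rw [natDegree_natCast] at t2
    omega
  exact (natDegree_add_le _ _).trans (max_le h1 h2)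

private lemma coeff_divX_iterate (P : Polynomial (Polynomial ℤ)) (k n : ℕ) :
    (Polynomial.divX^[k] P).coeff n = P.coeff (n + k) := by
  induction k generalizing P with
  | zero => rfl
  | succ m ih =>
      rw [Function.iterate_succ_apply, ih, coeff_divX]; ring_nf

private lemma natDegree_derivative_int (p : Polynomial ℤ) (hp : 0 < p.natDegree) :
    (derivative p).natDegree = p.natDegree - 1 ∧ derivative p ≠ 0 := by
  have hp0 : p ≠ 0 := fun hz => by simp [hz] at hp
  have hc : (derivative p).coeff (p.natDegree - 1) ≠ 0 := by
    rw [coeff_derivative, show p.natDegree - 1 + 1 = p.natDegree by omega]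
    have h1 : p.coeff p.natDegree ≠ 0 := leadingCoeff_ne_zero.mpr hp0
    have h2 : ((p.natDegree - 1 : ℕ) : ℤ) + 1 ≠ 0 := by positivity
    exact mul_ne_zero h1 h2
  refine ⟨le_antisymm (natDegree_derivative_le p) (le_natDegree_of_ne_zero hc), ?_⟩
  intro hz; rw [hz] at hc; simp at hc

private lemma key_ne_zero (h : Polynomial ℤ) (hδ : 0 < h.natDegree) (a : Polynomial ℤ)
    (ha : a ≠ 0) (c : ℤ) (hc : c ≠ 0) :
    derivative a + a * C c * derivative h ≠ 0 := by
  have hh' : derivative h ≠ 0 := fun hz => by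
    have := natDegree_eq_zero_of_derivative_eq_zero hz; omega
  have hC : (C c : Polynomial ℤ) ≠ 0 := by simpa using hc
  have ht2 : a * C c * derivative h ≠ 0 := mul_ne_zero (mul_ne_zero ha hC) hh'
  by_cases hca : a.natDegree = 0
  · obtain ⟨x, hx⟩ := natDegree_eq_zero.mp hca
    have hda : derivative a = 0 := by rw [← hx]; simp
    rw [hda, zero_add]; exact ht2
  · have hd1 : (derivative a).natDegree < (a * C c * derivative h).natDegree := by
      rw [natDegree_mul (mul_ne_zero ha hC) hh', natDegree_mul ha hC, natDegree_C]
      have := natDegree_derivative_le a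
      omega
    intro hzero
    have hdeg := degree_add_eq_right_of_degree_lt (degree_lt_degree hd1)
    rw [hzero, degree_zero] at hdeg
    exact ht2 (degree_eq_bot.mp hdeg.symm)

theorem pder_pseudo_degree (h : Polynomial ℤ) (F : Polynomial (Polynomial ℤ)) (hF : F ≠ 0)
    (δ d₀ m₀ n₀ : ℕ) (hδ : h.natDegree = δ) (hδpos : 0 < δ)
    (hd0 : degX F = d₀) (hm0 : F.natDegree = m₀) (hn0 : (F.coeff 0).natDegree = n₀) :
    degX (pderPoly h F) ≤ d₀ + δ - 1 ∧
    (n₀ ≠ 0 →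
      (pderPoly h F).natDegree = m₀ ∧ ((pderPoly h F).coeff 0).natDegree = n₀ - 1) ∧
    (n₀ = 0 →
      (pderPoly h F).natDegree ≤ m₀ - 1 ∧
        ((pderPoly h F).coeff 0).natDegree ≤ d₀ + δ - 1) ∧
    (¬ (∃ c : ℤ, F = Polynomial.C (Polynomial.C c)) →
      toLex ((pderPoly h F).natDegree, ((pderPoly h F).coeff 0).natDegree) <
        toLex (m₀, n₀)) := by
  classical
  subst hδ hd0 hm0 hn0
  set Ft := FtildeE h F with hFt
  have hδpos' : 0 < h.natDegree := hδpos
  have hcoeff : ∀ n, Ft.coeff n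
      = derivative (F.coeff n) + F.coeff n * (n : Polynomial ℤ) * derivative h :=
    coeff_Ftilde h F
  have hbound : ∀ n, (Ft.coeff n).natDegree ≤ degX F + h.natDegree - 1 :=
    fun n => coeff_Ftilde_natDegree_le h F n hδpos'
  have hFtdeg : Ft.natDegree ≤ F.natDegree := by
    rw [natDegree_le_iff_coeff_eq_zero]
    intro N hN
    rw [hcoeff, coeff_eq_zero_of_natDegree_lt hN]
    simp
  by_cases hn : 0 < (F.coeff 0).natDegree
  · -- case n₀ ≠ 0
    obtain ⟨hdeq, hdne⟩ := natDegree_derivative_int (F.coeff 0) hn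
    have hc0 : Ft.coeff 0 = derivative (F.coeff 0) := by
      rw [hcoeff]; simp
    have hFtne : Ft ≠ 0 := fun hz => hdne (by rw [← hc0, hz, coeff_zero])
    have hpd : pderPoly h F = Ft := by
      rw [pderPoly]; simp only [← hFt]; rw [if_neg hFtne, if_pos hn]
    have hdegFt : Ft.natDegree = F.natDegree := by
      refine le_antisymm hFtdeg (le_natDegree_of_ne_zero ?_)
      rw [hcoeff]
      by_cases hm : F.natDegree = 0
      · rw [hm]
        simpa using hdne
      · have ha : F.coeff F.natDegree ≠ 0 := leadingCoeff_ne_zero.mpr hF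
        have hcast : ((F.natDegree : ℕ) : Polynomial ℤ) = C ((F.natDegree : ℕ) : ℤ) := by
          simp
        rw [hcast]
        exact key_ne_zero h hδpos' _ ha _ (by exact_mod_cast hm)
    refine ⟨?_, fun _ => ⟨by rw [hpd, hdegFt], by rw [hpd, hc0, hdeq]⟩, fun h0 => absurd h0 (by omega), fun _ => ?_⟩
    · rw [hpd]; exact degX_le hbound
    · rw [hpd, hdegFt, hc0, hdeq, Prod.Lex.lt_iff]
      right
      exact ⟨rfl, by show (F.coeff 0).natDegree - 1 < (F.coeff 0).natDegree; omega⟩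
  · -- case n₀ = 0
    have hn0 : (F.coeff 0).natDegree = 0 := by omega
    have hc0 : Ft.coeff 0 = 0 := by
      obtain ⟨x, hx⟩ := natDegree_eq_zero.mp hn0
      rw [hcoeff]
      simp [← hx]
    by_cases hFz : Ft = 0
    · have hpd : pderPoly h F = 0 := by
        rw [pderPoly]; simp only [← hFt]; rw [if_pos hFz]
      rw [hpd]
      refine ⟨by simp [degX], fun h0 => absurd hn0 h0, fun _ => ⟨by simp, by simp⟩, fun hnc => ?_⟩
      have hm : F.natDegree ≠ 0 := by
        intro hm0
        obtain ⟨x, hx⟩ := natDegree_eq_zero.mp hm0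
        obtain ⟨c, hcx⟩ := natDegree_eq_zero.mp (by rw [← hx] at hn0; simpa using hn0)
        exact hnc ⟨c, by rw [← hx, ← hcx]⟩
      rw [Prod.Lex.lt_iff]
      left
      simpa using Nat.pos_of_ne_zero hm
    · set k := Ft.natTrailingDegree with hk
      have hpd : pderPoly h F = Polynomial.divX^[k] Ft := by
        rw [pderPoly]; simp only [← hFt]; rw [if_neg hFz, if_neg hn]
      have hkpos : 0 < k := by
        rw [hk]
        exact Nat.pos_of_ne_zero (natTrailingDegree_ne_zero.mpr ⟨hFz, hc0⟩)
      have hcpd : ∀ n, (pderPoly h F).coeff n = Ft.coeff (n + k) := by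
        intro n; rw [hpd, coeff_divX_iterate]
      have hdle : (pderPoly h F).natDegree ≤ F.natDegree - 1 := by
        rw [natDegree_le_iff_coeff_eq_zero]
        intro N hN
        rw [hcpd]
        exact coeff_eq_zero_of_natDegree_lt (by omega)
      refine ⟨degX_le fun n => by rw [hcpd]; exact hbound _, fun h0 => absurd hn0 h0,
        fun _ => ⟨hdle, by rw [hcpd]; exact hbound _⟩, fun hnc => ?_⟩
      have hm : F.natDegree ≠ 0 := by
        intro hm0
        obtain ⟨x, hx⟩ := natDegree_eq_zero.mp hm0
        obtain ⟨c, hcx⟩ := natDegree_eq_zero.mp (by rw [← hx] at hn0; simpa using hn0)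
        exact hnc ⟨c, by rw [← hx, ← hcx]⟩
      rw [Prod.Lex.lt_iff]
      left
      show (pderPoly h F).natDegree < F.natDegree
      omega

end
end

section
/- Let f, g : (a,b) → ℝ be continuous, (f₀,…,f_N) a Sturm sequence for f with respect to g, and t ∈ (a,b) with f₀(t) ≠ 0. Then there exists ε > 0 such that the sign-variation count v(x) of (f₀(x),…,f_N(x)) is constant equal to v(t) on (t−ε, t+ε). -/
open Set

noncomputable section

/-- Number of sign changes between consecutive entries of a list of reals. -/
def signChanges : List ℝ → ℕ
  | a :: b :: t => (if a * b < 0 then 1 else 0) + signChanges (b :: t)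
  | _ => 0

/-- Number of sign variations of a tuple of reals, after removing zero entries. -/
def signVar (l : List ℝ) : ℕ :=
  signChanges (l.filter (fun x => decide (x ≠ 0)))

/-- `v N F x` is the number of sign variations in `(F 0 x, …, F N x)` after removing zeros. -/
def v (N : ℕ) (F : ℕ → ℝ → ℝ) (x : ℝ) : ℕ :=
  signVar ((List.range (N + 1)).map (fun i => F i x))

/-- `(F 0, …, F N)` is a Sturm sequence in `(a,b)` for `f` with respect to `g`. -/
def SturmSeq (a b : ℝ) (f g : ℝ → ℝ) (N : ℕ) (F : ℕ → ℝ → ℝ) : Prop :=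
  (∀ i ≤ N, ContinuousOn (F i) (Ioo a b)) ∧
  (∀ y ∈ Ioo a b, (F 0 y = 0 ↔ (f y = 0 ∧ g y ≠ 0))) ∧
  (∀ y ∈ Ioo a b, F 0 y = 0 →
    ∃ ε > 0, (∀ x ∈ Ioo (y - ε) (y + ε), F 1 x ≠ 0) ∧
      (g y > 0 →
        (∀ x ∈ Ioo (y - ε) y, F 0 x * F 1 x < 0) ∧
        (∀ x ∈ Ioo y (y + ε), F 0 x * F 1 x > 0)) ∧
      (g y < 0 →
        (∀ x ∈ Ioo (y - ε) y, F 0 x * F 1 x > 0) ∧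
        (∀ x ∈ Ioo y (y + ε), F 0 x * F 1 x < 0))) ∧
  (∀ y ∈ Ioo a b, ∀ i, 1 ≤ i → i ≤ N - 1 → F i y = 0 → F (i - 1) y * F (i + 1) y < 0) ∧
  (∀ y ∈ Ioo a b, F N y ≠ 0)

/-- Compatibility relation between a reference list and a perturbed list. -/
inductive SturmRel : List ℝ → List ℝ → Prop
  | single (a a' : ℝ) (h : a * a' > 0) : SturmRel [a] [a']
  | cons2 (a a' : ℝ) {b : ℝ} {l m : List ℝ} (ha : a * a' > 0)
      (h : SturmRel (b :: l) m) : SturmRel (a :: b :: l) (a' :: m)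
  | consZero (a a' b' : ℝ) {c : ℝ} {l m : List ℝ} (ha : a * a' > 0) (hac : a * c < 0)
      (h : SturmRel (c :: l) m) : SturmRel (a :: 0 :: c :: l) (a' :: b' :: m)

lemma ne_of_mul_pos {a a' : ℝ} (h : a * a' > 0) : a ≠ 0 ∧ a' ≠ 0 := by
  constructor <;> rintro rfl <;> simp at h

lemma sign_transfer {a a' b b' : ℝ} (ha : a * a' > 0) (hb : b * b' > 0) :
    (a * b < 0 ↔ a' * b' < 0) := by
  have h : (a * b) * (a' * b') > 0 := by nlinarith
  rcases mul_pos_iff.mp h with ⟨h1, h2⟩ | ⟨h1, h2⟩ <;> constructor <;> intro <;> linarith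

lemma sign_transfer_neg {a a' b b' : ℝ} (ha : a * a' > 0) (hb : b * b' > 0)
    (hab : a * b < 0) : a' * b' < 0 := (sign_transfer ha hb).mp hab

lemma signVar_cons_cons {a b : ℝ} (ha : a ≠ 0) (hb : b ≠ 0) (l : List ℝ) :
    signVar (a :: b :: l) = (if a * b < 0 then 1 else 0) + signVar (b :: l) := by
  simp [signVar, List.filter_cons, ha, hb, signChanges]

lemma signVar_cons_zero (a : ℝ) (l : List ℝ) :
    signVar (a :: (0:ℝ) :: l) = signVar (a :: l) := by
  simp [signVar, List.filter_cons]

lemma SturmRel_main : ∀ {l m : List ℝ}, SturmRel l m →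
    (∃ a a' l' m', l = a :: l' ∧ m = a' :: m' ∧ a * a' > 0) ∧ signVar m = signVar l := by
  intro l m h
  induction h with
  | single a a' h =>
    refine ⟨⟨a, a', [], [], rfl, rfl, h⟩, ?_⟩
    obtain ⟨ha, ha'⟩ := ne_of_mul_pos h
    simp [signVar, List.filter_cons, ha, ha', signChanges]
  | cons2 a a' ha h ih =>
    rename_i b l m
    obtain ⟨⟨b0, b', l', m', hl, hm, hbb⟩, hsv⟩ := ih
    obtain ⟨hb0, hb'⟩ := ne_of_mul_pos hbb
    obtain ⟨hane, ha'ne⟩ := ne_of_mul_pos ha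
    have hb : b = b0 := by injection hl
    subst hb
    subst hm
    refine ⟨⟨a, a', _, _, rfl, rfl, ha⟩, ?_⟩
    rw [signVar_cons_cons hane hb0, signVar_cons_cons ha'ne hb', hsv,
      if_congr (sign_transfer ha hbb).symm rfl rfl]
  | consZero a a' b' ha hac h ih =>
    rename_i c l m
    obtain ⟨⟨c0, c', l', m', hl, hm, hcc⟩, hsv⟩ := ih
    obtain ⟨hc0, hc'⟩ := ne_of_mul_pos hcc
    obtain ⟨hane, ha'ne⟩ := ne_of_mul_pos ha
    have hc : c = c0 := by injection hl
    subst hc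
    subst hm
    refine ⟨⟨a, a', _, _, rfl, rfl, ha⟩, ?_⟩
    have ha'c' : a' * c' < 0 := sign_transfer_neg ha hcc hac
    have key : signVar (a :: 0 :: c :: l) = 1 + signVar (c :: l) := by
      rw [signVar_cons_zero, signVar_cons_cons hane hc0, if_pos hac]
    rw [key]
    by_cases hb' : b' = 0
    · subst hb'
      rw [signVar_cons_zero, signVar_cons_cons ha'ne hc', hsv, if_pos ha'c']
    · rw [signVar_cons_cons ha'ne hb', signVar_cons_cons hb' hc', hsv]
      have hone : (if a' * b' < 0 then 1 else 0) + (if b' * c' < 0 then (1:ℕ) else 0) = 1 := by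
        have hbsq : 0 < b' * b' := mul_self_pos.mpr hb'
        split_ifs with hx hy hy
        · exfalso; nlinarith
        · rfl
        · rfl
        · exfalso
          have hx' := not_lt.mp hx
          have hy' := not_lt.mp hy
          nlinarith
      omega

lemma buildRel (F : ℕ → ℝ → ℝ) (N : ℕ) (t x : ℝ)
    (hsign : ∀ i ≤ N, F i t ≠ 0 → F i t * F i x > 0)
    (hzero : ∀ i, 1 ≤ i → i ≤ N - 1 → F i t = 0 → F (i - 1) t * F (i + 1) t < 0)
    (hN : F N t ≠ 0) :
    ∀ n, ∀ k, k + n = N + 1 → 1 ≤ n → F k t ≠ 0 →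
      SturmRel ((List.range' k n).map (fun i => F i t))
        ((List.range' k n).map (fun i => F i x)) := by
  intro n
  induction n using Nat.strong_induction_on with
  | _ n ih =>
    intro k hkn hn hk
    rcases n with _ | _ | m
    · omega
    · have hkN : k = N := by omega
      subst hkN
      exact SturmRel.single _ _ (hsign k le_rfl hN)
    · have hkN : k ≤ N := by omega
      by_cases h1 : F (k+1) t = 0
      · -- then k+1 < N so m+2 ≥ 3
        have hk1N : k + 1 ≠ N := by rintro rfl; exact hN h1
        have hm : 1 ≤ m := by omega
        obtain ⟨m', rfl⟩ : ∃ m', m = m' + 1 := ⟨m - 1, by omega⟩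
        have hprod : F k t * F (k+2) t < 0 := by
          have := hzero (k+1) (by omega) (by omega) h1
          simpa using this
        have hk2 : F (k+2) t ≠ 0 := by
          intro h; rw [h, mul_zero] at hprod; exact lt_irrefl 0 hprod
        have hrec := ih (m' + 1) (by omega) (k+2) (by omega) (by omega) hk2
        show SturmRel ((List.map _ (k :: (k+1) :: List.range' (k+2) (m'+1))))
          ((List.map _ (k :: (k+1) :: List.range' (k+2) (m'+1))))
        simp only [List.map_cons, h1]
        exact SturmRel.consZero _ _ _ (hsign k hkN hk) hprod (by simpa [List.range'] using hrec)
      · have hrec := ih (m+1) (by omega) (k+1) (by omega) (by omega) h1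
        show SturmRel ((List.map _ (k :: List.range' (k+1) (m+1))))
          ((List.map _ (k :: List.range' (k+1) (m+1))))
        simp only [List.map_cons]
        exact SturmRel.cons2 _ _ (hsign k hkN hk) (by simpa [List.range'] using hrec)

theorem variation_locally_constant {a b : ℝ} {N : ℕ} {f g : ℝ → ℝ} {F : ℕ → ℝ → ℝ}
    (hf : ContinuousOn f (Ioo a b)) (hg : ContinuousOn g (Ioo a b))
    (hSturm : SturmSeq a b f g N F)
    {t : ℝ} (ht : t ∈ Ioo a b) (h0 : F 0 t ≠ 0) :
    ∃ ε > 0, Ioo (t - ε) (t + ε) ⊆ Ioo a b ∧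
      ∀ x ∈ Ioo (t - ε) (t + ε), v N F x = v N F t := by
  obtain ⟨hcont, -, -, hzero, hlast⟩ := hSturm
  have hNt : F N t ≠ 0 := hlast t ht
  -- each sign-preservation set is a neighborhood of t
  have hS : ∀ i ∈ Finset.range (N+1), {x | F i t = 0 ∨ F i t * F i x > 0} ∈ nhds t := by
    intro i hi
    by_cases hFi : F i t = 0
    · filter_upwards with x; exact Or.inl hFi
    · have hci : ContinuousAt (F i) t :=
        (hcont i (by simpa [Nat.lt_succ_iff] using hi)).continuousAt (isOpen_Ioo.mem_nhds ht)
      have : ContinuousAt (fun x => F i t * F i x) t := continuousAt_const.mul hci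
      have hmem : {x | F i t * F i x > 0} ∈ nhds t := by
        have := this.preimage_mem_nhds (isOpen_Ioi.mem_nhds (by
          exact mul_self_pos.mpr hFi))
        simpa [Set.preimage, Set.mem_Ioi] using this
      filter_upwards [hmem] with x hx; exact Or.inr hx
  have hU : (Ioo a b ∩ ⋂ i ∈ Finset.range (N+1), {x | F i t = 0 ∨ F i t * F i x > 0})
      ∈ nhds t := by
    refine Filter.inter_mem (isOpen_Ioo.mem_nhds ht) ?_
    exact (Filter.biInter_finset_mem _).mpr hS
  obtain ⟨ε, hε, hball⟩ := Metric.mem_nhds_iff.mp hU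
  refine ⟨ε, hε, ?_, ?_⟩
  · intro x hx
    have : x ∈ Metric.ball t ε := by rwa [Real.ball_eq_Ioo]
    exact (hball this).1
  · intro x hx
    have hx' : x ∈ Metric.ball t ε := by rwa [Real.ball_eq_Ioo]
    have hxU := hball hx'
    have hsign : ∀ i ≤ N, F i t ≠ 0 → F i t * F i x > 0 := by
      intro i hi hFi
      have := Set.mem_iInter₂.mp hxU.2 i (Finset.mem_range.mpr (by omega))
      rcases this with h | h
      · exact absurd h hFi
      · exact h
    have hrel := buildRel F N t x hsign (fun i h1 h2 hz => hzero t ht i h1 h2 hz) hNt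
      (N+1) 0 (by omega) (by omega) h0
    have := (SturmRel_main hrel).2
    simpa [v, List.range_eq_range'] using this

end
end
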